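/- Let R be a commutative ring of prime characteristic p > 0, q = p^γ a power of p, S = R[t], l ≥ 1, and A(t) ∈ M_l(S), with matrix polynomials H^e_n(τ) defined by A(t)^{e−1} = Σ_{0≤n<q^e} H^e_n(t^{q^e}) t^n. Then for every e ≥ 1, the smallest additive subgroup of S^{⊕l} containing A(t)^{e−1}·S^{⊕l} and stable under multiplication by t, under each operator θ_i = t^{p^{i−1}} ∂_t^{[p^{i−1}]} for 1 ≤ i ≤ γe, and under the coefficientwise action of every q^e-linear additive endomorphism of R, equals the additive subgroup of S^{⊕l} generated by { φ(t^a · H^e_n(t^{q^e}) t^n v) : φ a q^e-linear additive endomorphism of R acting coefficientwise, a ≥ 0, 0 ≤ n < q^e, v ∈ R^{⊕l} }. -/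

import Mathlib

noncomputable section

open Polynomial

/-- The Frobenius-twisted product `A(t)^{e-1} = A(t)^{[q^{e-1}]} ⋯ A(t)^{[q]} · A(t)`
(with `e` factors), where `B^{[m]}` denotes the matrix of entrywise `m`-th powers. -/
def twistProd {R : Type*} [CommRing R] {l : ℕ} (q : ℕ)
    (A : Matrix (Fin l) (Fin l) (Polynomial R)) : ℕ → Matrix (Fin l) (Fin l) (Polynomial R)
  | 0 => 1
  | e + 1 => (Matrix.of fun i j => (A i j) ^ q ^ e) * twistProd q A e

/-- The matrix polynomial `H^e_n(τ)` extracted from `B = A(t)^{e-1}`: its `τ^k`-coefficient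
is the coefficient of `t^{k q^e + n}` in `B`, so that `B = Σ_{0≤n<q^e} H^e_n(t^{q^e}) t^n`. -/
def Hmat {R : Type*} [CommRing R] {l : ℕ} (q e : ℕ)
    (B : Matrix (Fin l) (Fin l) (Polynomial R)) (n : ℕ) :
    Matrix (Fin l) (Fin l) (Polynomial R) :=
  Matrix.of fun i j =>
    ∑ kk ∈ Finset.range ((B i j).natDegree + 1), C ((B i j).coeff (kk * q ^ e + n)) * X ^ kk

/-- An additive endomorphism `φ` of `R` is `Q`-linear if `φ(a^Q b) = a^Q φ(b)`. -/
def IsQLinear {R : Type*} [CommRing R] (Q : ℕ) (φ : R →+ R) : Prop :=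
  ∀ a b : R, φ (a ^ Q * b) = a ^ Q * φ b

/-- The Euler operator `θ = t^c ∂_t^{[c]}` acting on a polynomial:
`r t^n ↦ binom(n,c) r t^n`. -/
def thetaOp {R : Type*} [CommRing R] (c : ℕ) (f : Polynomial R) : Polynomial R :=
  f.sum fun n a => C ((n.choose c : R) * a) * X ^ n

/-- The coefficientwise action of an additive endomorphism `φ` of `R` on a polynomial. -/
def coeffMap {R : Type*} [CommRing R] (φ : R →+ R) (f : Polynomial R) : Polynomial R :=
  f.sum fun n a => C (φ a) * X ^ n

/-- `D^e_R[t,θ_1,…,θ_{γe}]·T`: the smallest additive subgroup of `R[t]^{⊕l}` containing `T`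
and stable under multiplication by `t`, under `θ_i = t^{p^{i-1}} ∂_t^{[p^{i-1}]}` for
`1 ≤ i ≤ γe`, and under the coefficientwise action of every `Q = q^e`-linear additive
endomorphism of `R`. -/
def VClosure {R : Type*} [CommRing R] {l : ℕ} (p γe Q : ℕ)
    (T : Set (Fin l → Polynomial R)) : AddSubgroup (Fin l → Polynomial R) :=
  sInf {V : AddSubgroup (Fin l → Polynomial R) | T ⊆ ↑V ∧
    (∀ v ∈ V, (fun i => X * v i) ∈ V) ∧
    (∀ i : ℕ, 1 ≤ i → i ≤ γe → ∀ v ∈ V, (fun j => thetaOp (p ^ (i - 1)) (v j)) ∈ V) ∧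
    (∀ φ : R →+ R, IsQLinear Q φ → ∀ v ∈ V, (fun j => coeffMap φ (v j)) ∈ V)}

end

noncomputable section AuxStuff

open Polynomial Finset

variable {R : Type*} [CommRing R]

theorem coeffMap_coeff (φ : R →+ R) (f : Polynomial R) (m : ℕ) :
    (coeffMap φ f).coeff m = φ (f.coeff m) := by
  rw [coeffMap, Polynomial.sum_def, finset_sum_coeff]
  simp only [coeff_C_mul, coeff_X_pow, mul_ite, mul_one, mul_zero]
  rw [Finset.sum_ite_eq f.support m (fun n => φ (f.coeff n))]
  split_ifs with h
  · rfl
  · rw [Polynomial.notMem_support_iff.mp h, map_zero]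

theorem thetaOp_coeff (c : ℕ) (f : Polynomial R) (m : ℕ) :
    (thetaOp c f).coeff m = (m.choose c : R) * f.coeff m := by
  rw [thetaOp, Polynomial.sum_def, finset_sum_coeff]
  simp only [coeff_C_mul, coeff_X_pow, mul_ite, mul_one, mul_zero]
  rw [Finset.sum_ite_eq f.support m (fun n => ((n.choose c : R) * f.coeff n))]
  split_ifs with h
  · rfl
  · rw [Polynomial.notMem_support_iff.mp h, mul_zero]

theorem coeffMap_add (φ : R →+ R) (f g : Polynomial R) :
    coeffMap φ (f + g) = coeffMap φ f + coeffMap φ g := by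
  ext m; simp [coeffMap_coeff]

theorem coeffMap_zero (φ : R →+ R) : coeffMap φ (0 : Polynomial R) = 0 := by
  ext m; simp [coeffMap_coeff]

theorem coeffMap_id (f : Polynomial R) : coeffMap (AddMonoidHom.id R) f = f := by
  ext m; simp [coeffMap_coeff]

theorem coeffMap_comp_apply (φ ψ : R →+ R) (f : Polynomial R) :
    coeffMap φ (coeffMap ψ f) = coeffMap (φ.comp ψ) f := by
  ext m; simp [coeffMap_coeff]

theorem coeffMap_X_mul (φ : R →+ R) (f : Polynomial R) :
    coeffMap φ (X * f) = X * coeffMap φ f := by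
  ext m
  cases m with
  | zero => simp [coeffMap_coeff, Polynomial.mul_coeff_zero]
  | succ m => simp [coeffMap_coeff, Polynomial.coeff_X_mul]

theorem coeffMap_nsmul (φ : R →+ R) (d : ℕ) (f : Polynomial R) :
    coeffMap φ (d • f) = d • coeffMap φ f := by
  ext m
  rw [coeffMap_coeff, Polynomial.coeff_smul, Polynomial.coeff_smul, coeffMap_coeff, map_nsmul]

theorem thetaOp_coeffMap (c : ℕ) (φ : R →+ R) (f : Polynomial R) :
    thetaOp c (coeffMap φ f) = coeffMap φ (thetaOp c f) := by
  ext m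
  rw [thetaOp_coeff, coeffMap_coeff, coeffMap_coeff, thetaOp_coeff]
  rw [← nsmul_eq_mul, ← nsmul_eq_mul, map_nsmul]

/-- support residue condition -/
def SuppRes (Q r : ℕ) (f : Polynomial R) : Prop := ∀ m, f.coeff m ≠ 0 → m % Q = r % Q

theorem suppRes_sum {Q r : ℕ} {ι : Type*} (s : Finset ι) (F : ι → Polynomial R)
    (h : ∀ x ∈ s, SuppRes Q r (F x)) : SuppRes Q r (∑ x ∈ s, F x) := by
  intro m hm
  by_contra hne
  apply hm
  rw [finset_sum_coeff]
  exact Finset.sum_eq_zero fun x hx => by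
    by_contra h0; exact hne (h x hx m h0)

theorem suppRes_comp_Xpow (Q : ℕ) (g : Polynomial R) : SuppRes Q 0 (g.comp (X ^ Q)) := by
  intro m hm
  rw [Polynomial.comp, Polynomial.eval₂_eq_sum, Polynomial.sum_def, finset_sum_coeff] at hm
  simp only [← pow_mul, coeff_C_mul, coeff_X_pow] at hm
  obtain ⟨k, -, hk⟩ := Finset.exists_ne_zero_of_sum_ne_zero hm
  have : m = Q * k := by
    by_contra hne; simp [hne] at hk
  simp [this, Nat.mul_mod_right]

theorem suppRes_mul_C {Q r : ℕ} {f : Polynomial R} (h : SuppRes Q r f) (a : R) :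
    SuppRes Q r (f * C a) := by
  intro m hm
  rw [Polynomial.coeff_mul_C] at hm
  exact h m (fun h0 => hm (by rw [h0, zero_mul]))

theorem suppRes_mul_Xpow {Q r : ℕ} {f : Polynomial R} (h : SuppRes Q r f) (a : ℕ) :
    SuppRes Q (r + a) (f * X ^ a) := by
  intro m hm
  rw [Polynomial.coeff_mul_X_pow'] at hm
  split_ifs at hm with hle
  · have h1 : (m - a) % Q = r % Q := h _ hm
    have : (m - a) + a ≡ r + a [MOD Q] := Nat.ModEq.add_right a h1
    rwa [Nat.sub_add_cancel hle] at this
  · exact absurd rfl hm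

theorem suppRes_coeffMap {Q r : ℕ} {f : Polynomial R} (h : SuppRes Q r f) (φ : R →+ R) :
    SuppRes Q r (coeffMap φ f) := by
  intro m hm
  rw [coeffMap_coeff] at hm
  exact h m (fun h0 => hm (by rw [h0, map_zero]))

end AuxStuff

section Lucas

open Polynomial Finset

theorem lucas_digit_zmod (p : ℕ) [Fact p.Prime] (j m : ℕ) :
    ((m.choose (p ^ j) : ℕ) : ZMod p) = ((m / p ^ j % p : ℕ) : ZMod p) := by
  have hp : 1 < p := (Fact.out : p.Prime).one_lt
  induction j generalizing m with
  | zero =>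
    simp only [pow_zero, Nat.choose_one_right, Nat.pow_zero, Nat.div_one]
    rw [ZMod.natCast_mod]
  | succ j ih =>
    have h := (ZMod.natCast_eq_natCast_iff _ _ _).mpr
      (Choose.choose_modEq_choose_mod_mul_choose_div_nat (p := p) (n := m) (k := p ^ (j + 1)))
    have h1 : p ^ (j + 1) % p = 0 := by
      simp [pow_succ, Nat.mul_mod_left]
    have h2 : p ^ (j + 1) / p = p ^ j := by
      rw [pow_succ]; exact Nat.mul_div_cancel _ (by omega)
    rw [h1, h2, Nat.choose_zero_right, one_mul] at h
    rw [h, ih, Nat.div_div_eq_div_mul, mul_comm, ← pow_succ]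

variable {R : Type*} [CommRing R]

theorem lucas_digit (p : ℕ) [Fact p.Prime] [CharP R p] (j m : ℕ) :
    ((m.choose (p ^ j) : ℕ) : R) = ((m / p ^ j % p : ℕ) : R) := by
  have := congrArg (ZMod.castHom (dvd_refl p) R) (lucas_digit_zmod p j m)
  simpa only [map_natCast] using this

/-- The key eigenvalue property. -/
theorem thetaOp_suppRes (p : ℕ) [Fact p.Prime] [CharP R p] {Q r j : ℕ}
    (hd : p ^ (j + 1) ∣ Q) {f : Polynomial R} (hf : SuppRes Q r f) :
    thetaOp (p ^ j) f = (r / p ^ j % p) • f := by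
  ext m
  rw [thetaOp_coeff, Polynomial.coeff_smul, nsmul_eq_mul]
  by_cases h0 : f.coeff m = 0
  · rw [h0, mul_zero, mul_zero]
  · congr 1
    have hmod : m % p ^ (j + 1) = r % p ^ (j + 1) :=
      (Nat.ModEq.of_dvd hd (hf m h0))
    have key : ∀ x : ℕ, x / p ^ j % p = x % p ^ (j + 1) / p ^ j := by
      intro x
      rw [pow_succ, Nat.mod_mul_right_div_self]
    rw [lucas_digit p j m, key m, hmod, ← key r]

end Lucas

section Sep

open Polynomial Finset

variable {R : Type*} [CommRing R] {l : ℕ}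

abbrev MV (R : Type*) [CommRing R] (l : ℕ) := Fin l → Polynomial R

theorem sep_aux (V : AddSubgroup (MV R l)) (θ : MV R l →+ MV R l)
    (hθ : ∀ w ∈ V, θ w ∈ V) (s : Finset ℕ) :
    ∀ h : ℕ → MV R l,
      (∀ d ∈ s, θ (h d) = (d : ℤ) • h d) → (∑ d ∈ s, h d) ∈ V →
      ∀ d₀ ∈ s, (∏ d' ∈ s.erase d₀, ((d₀ : ℤ) - (d' : ℤ))) • h d₀ ∈ V := by
  induction s using Finset.strongInduction with
  | _ s ih =>
    intro h heig hmem d₀ hd₀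
    by_cases hs : s.erase d₀ = ∅
    · have hss : s = {d₀} := by
        rcases (Finset.erase_eq_empty_iff s d₀).mp hs with h1 | h1
        · exact absurd (h1 ▸ hd₀) (Finset.notMem_empty d₀)
        · exact h1
      rw [hs, Finset.prod_empty, one_smul]
      rw [hss, Finset.sum_singleton] at hmem
      exact hmem
    · obtain ⟨a, ha⟩ := Finset.nonempty_iff_ne_empty.mpr hs
      have haS : a ∈ s := Finset.mem_of_mem_erase ha
      have hane : a ≠ d₀ := Finset.ne_of_mem_erase ha
      set w := ∑ d ∈ s, h d with hw
      have hkey : (∑ d ∈ s.erase a, ((d : ℤ) - (a : ℤ)) • h d) ∈ V := by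
        have heq : θ w - (a : ℤ) • w = ∑ d ∈ s, ((d : ℤ) - (a : ℤ)) • h d := by
          rw [hw, map_sum, Finset.smul_sum, ← Finset.sum_sub_distrib]
          exact Finset.sum_congr rfl fun d hd => by rw [heig d hd, ← sub_smul]
        have heq2 : ∑ d ∈ s.erase a, ((d : ℤ) - (a : ℤ)) • h d
            = ∑ d ∈ s, ((d : ℤ) - (a : ℤ)) • h d :=
          Finset.sum_erase s (by simp)
        rw [heq2, ← heq]
        exact sub_mem (hθ w hmem) (AddSubgroup.zsmul_mem V hmem _)
      have hd₀' : d₀ ∈ s.erase a := Finset.mem_erase.mpr ⟨hane.symm, hd₀⟩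
      have := ih (s.erase a) (Finset.erase_ssubset haS)
        (fun d => ((d : ℤ) - (a : ℤ)) • h d)
        (fun d hd => by
          rw [map_zsmul, heig d (Finset.mem_of_mem_erase hd), smul_comm])
        hkey d₀ hd₀'
      rw [smul_smul] at this
      have hprod : (∏ d' ∈ s.erase d₀, ((d₀ : ℤ) - (d' : ℤ)))
          = (∏ d' ∈ (s.erase a).erase d₀, ((d₀ : ℤ) - (d' : ℤ))) * ((d₀ : ℤ) - (a : ℤ)) := by
        rw [Finset.erase_right_comm (a := a) (b := d₀)]
        rw [← Finset.mul_prod_erase (s.erase d₀) _ (Finset.mem_erase.mpr ⟨hane, haS⟩)]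
        ring
      rw [hprod]
      exact this

theorem smul_mem_cancel (p : ℕ) [Fact p.Prime] [CharP R p]
    (V : AddSubgroup (MV R l)) (c : ℤ) (hc : ¬ (p : ℤ) ∣ c)
    (x : MV R l) (hx : c • x ∈ V) : x ∈ V := by
  have hpz : (p : ℤ) • x = 0 := by
    funext j
    show (p : ℤ) • x j = 0
    ext m
    rw [Polynomial.coeff_smul, zsmul_eq_mul, Polynomial.coeff_zero]
    push_cast
    rw [CharP.cast_eq_zero R p, zero_mul]
  have hprime : Prime (p : ℤ) := Nat.prime_iff_prime_int.mp (Fact.out : p.Prime)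
  have hcop : IsCoprime (p : ℤ) c := (Prime.coprime_iff_not_dvd hprime).mpr hc
  obtain ⟨u, v, huv⟩ := hcop
  have : x = v • (c • x) := by
    calc x = (1 : ℤ) • x := (one_smul _ _).symm
    _ = (u * p + v * c) • x := by rw [huv]
    _ = u • ((p : ℤ) • x) + v • (c • x) := by rw [add_smul, mul_smul, mul_smul]
    _ = v • (c • x) := by rw [hpz, smul_zero, zero_add]
  rw [this]
  exact AddSubgroup.zsmul_mem V hx v

end Sep
section Multi

open Polynomial Finset

variable {R : Type*} [CommRing R] {l : ℕ}

/-- componentwise theta as an additive hom on vectors -/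
noncomputable def thetaVHom (R : Type*) [CommRing R] (l c : ℕ) : MV R l →+ MV R l where
  toFun w := fun j => thetaOp c (w j)
  map_zero' := by funext j; ext m; simp [thetaOp_coeff]
  map_add' f g := by funext j; ext m; simp [thetaOp_coeff]; ring

@[simp] theorem thetaVHom_apply (c : ℕ) (w : MV R l) (j : Fin l) :
    thetaVHom R l c w j = thetaOp c (w j) := rfl

theorem digit_prod_not_dvd (p : ℕ) (hp : p.Prime) (d₀ : ℕ) (hd₀ : d₀ < p) :
    ¬ (p : ℤ) ∣ ∏ d' ∈ (Finset.range p).erase d₀, ((d₀ : ℤ) - (d' : ℤ)) := by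
  intro hdvd
  have hprime : Prime (p : ℤ) := Nat.prime_iff_prime_int.mp hp
  obtain ⟨d', hd', hdd⟩ := hprime.exists_mem_finset_dvd hdvd
  rw [Finset.mem_erase, Finset.mem_range] at hd'
  have h0 : (d₀ : ℤ) - (d' : ℤ) = 0 := by
    refine Int.eq_zero_of_abs_lt_dvd hdd ?_
    refine abs_sub_lt_iff.mpr ⟨?_, ?_⟩ <;> (have h1 := hd'.2; have h2 := hd₀; omega)
  have : d₀ = d' := by exact_mod_cast sub_eq_zero.mp h0
  exact hd'.1 this.symm

theorem sep_multi (p : ℕ) [Fact p.Prime] [CharP R p] (γe : ℕ)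
    (V : AddSubgroup (MV R l))
    (hθ : ∀ i : ℕ, 1 ≤ i → i ≤ γe → ∀ v ∈ V, (fun j => thetaOp (p ^ (i - 1)) (v j)) ∈ V)
    (g : ℕ → MV R l)
    (hg : ∀ n < p ^ γe, ∀ j < γe, thetaVHom R l (p ^ j) (g n) = (n / p ^ j % p) • g n)
    (hw : (∑ n ∈ Finset.range (p ^ γe), g n) ∈ V) :
    ∀ n₀ < p ^ γe, g n₀ ∈ V := by
  intro n₀ hn₀
  have hp : p.Prime := Fact.out
  have hppos : 0 < p := hp.pos
  have key : ∀ s : ℕ, s ≤ γe →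
      (∑ n ∈ (Finset.range (p ^ γe)).filter (fun n => n % p ^ s = n₀ % p ^ s), g n) ∈ V := by
    intro s
    induction s with
    | zero =>
      intro _
      simpa [Nat.mod_one, Finset.filter_true_of_mem] using hw
    | succ s ih =>
      intro hs
      have hs' : s ≤ γe := by omega
      set A := (Finset.range (p ^ γe)).filter (fun n => n % p ^ s = n₀ % p ^ s) with hA
      have hAmem : (∑ n ∈ A, g n) ∈ V := ih hs'
      set h : ℕ → MV R l := fun d => ∑ n ∈ A.filter (fun n => n / p ^ s % p = d), g n with hh
      have hsum : ∑ d ∈ Finset.range p, h d = ∑ n ∈ A, g n :=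
        Finset.sum_fiberwise_of_maps_to (fun n _ => Finset.mem_range.mpr (Nat.mod_lt _ hppos)) g
      have heig : ∀ d ∈ Finset.range p, thetaVHom R l (p ^ s) (h d) = (d : ℤ) • h d := by
        intro d _
        rw [hh, map_sum]
        rw [Finset.smul_sum]
        refine Finset.sum_congr rfl fun n hn => ?_
        rw [Finset.mem_filter] at hn
        have hnQ : n < p ^ γe := by
          have := hn.1
          rw [hA, Finset.mem_filter, Finset.mem_range] at this
          exact this.1
        rw [hg n hnQ s (by omega), hn.2, natCast_zsmul]
      have hθ' : ∀ w ∈ V, thetaVHom R l (p ^ s) w ∈ V := fun w hwv =>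
        hθ (s + 1) (by omega) (by omega) w hwv
      set d₀ := n₀ / p ^ s % p with hd₀def
      have hd₀mem : d₀ ∈ Finset.range p := Finset.mem_range.mpr (Nat.mod_lt _ hppos)
      have hsep := sep_aux V (thetaVHom R l (p ^ s)) hθ' (Finset.range p) h heig
        (by rw [hsum]; exact hAmem) d₀ hd₀mem
      have hhd₀ : h d₀ ∈ V :=
        smul_mem_cancel p V _ (digit_prod_not_dvd p hp d₀ (Finset.mem_range.mp hd₀mem)) _ hsep
      have hset : A.filter (fun n => n / p ^ s % p = d₀)
          = (Finset.range (p ^ γe)).filter (fun n => n % p ^ (s + 1) = n₀ % p ^ (s + 1)) := by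
        rw [hA, Finset.filter_filter]
        refine Finset.filter_congr fun n _ => ?_
        have expand : ∀ x : ℕ, x % p ^ (s + 1) = p ^ s * (x / p ^ s % p) + x % p ^ s := by
          intro x
          rw [pow_succ, Nat.mod_mul]; ring
        have e1 : ∀ x : ℕ, x % p ^ s = x % p ^ (s + 1) % p ^ s := fun x =>
          (Nat.mod_mod_of_dvd x (pow_dvd_pow p (by omega))).symm
        have e2 : ∀ x : ℕ, x / p ^ s % p = x % p ^ (s + 1) / p ^ s := fun x => by
          rw [pow_succ, Nat.mod_mul_right_div_self]
        constructor
        · rintro ⟨h1, h2⟩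
          rw [expand n, expand n₀, h1, h2, hd₀def]
        · intro hmod
          refine ⟨?_, ?_⟩
          · rw [e1 n, e1 n₀, hmod]
          · rw [hd₀def, e2 n, e2 n₀, hmod]
      have hhd₀' : (∑ n ∈ (Finset.range (p ^ γe)).filter
          (fun n => n % p ^ (s + 1) = n₀ % p ^ (s + 1)), g n) ∈ V := by
        rw [← hset]; exact hhd₀
      exact hhd₀'
  have := key γe le_rfl
  have hfilt : (Finset.range (p ^ γe)).filter (fun n => n % p ^ γe = n₀ % p ^ γe) = {n₀} := by
    ext n
    simp only [Finset.mem_filter, Finset.mem_range, Finset.mem_singleton]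
    constructor
    · rintro ⟨hn, hmod⟩
      rwa [Nat.mod_eq_of_lt hn, Nat.mod_eq_of_lt hn₀] at hmod
    · rintro rfl
      exact ⟨hn₀, rfl⟩
  rwa [hfilt, Finset.sum_singleton] at this

end Multi
section Decomp

open Polynomial Finset

variable {R : Type*} [CommRing R]

theorem key_coeff (Q : ℕ) (hQ : 0 < Q) (b : Polynomial R) (n m : ℕ) (hn : n < Q) :
    ((∑ k ∈ Finset.range (b.natDegree + 1), C (b.coeff (k * Q + n)) * X ^ k).comp (X ^ Q)
        * X ^ n).coeff m = if m % Q = n then b.coeff m else 0 := by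
  rw [Polynomial.coeff_mul_X_pow']
  by_cases hle : n ≤ m
  · rw [if_pos hle]
    have hcomp : (∑ k ∈ Finset.range (b.natDegree + 1), C (b.coeff (k * Q + n)) * X ^ k).comp
        (X ^ Q) = ∑ k ∈ Finset.range (b.natDegree + 1), C (b.coeff (k * Q + n)) * X ^ (Q * k) := by
      rw [Polynomial.comp, Polynomial.eval₂_finset_sum]
      refine Finset.sum_congr rfl fun k _ => ?_
      rw [eval₂_mul, eval₂_C, eval₂_X_pow, ← pow_mul]
    rw [hcomp, finset_sum_coeff]
    simp only [coeff_C_mul, coeff_X_pow, mul_ite, mul_one, mul_zero]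
    by_cases hdvd : m % Q = n
    · set K := m / Q with hK
      have hm : m = Q * K + n := by
        conv_lhs => rw [← Nat.div_add_mod m Q, hdvd]
      have hsub : m - n = Q * K := by omega
      have hidx : K * Q + n = m := by rw [Nat.mul_comm K Q]; omega
      have h₀ : ∀ k ∈ Finset.range (b.natDegree + 1), k ≠ K →
          (if m - n = Q * k then b.coeff (k * Q + n) else 0) = 0 := by
        intro k _ hk
        rw [if_neg]
        intro hEq
        exact hk (Nat.eq_of_mul_eq_mul_left hQ (by omega : Q * k = Q * K))
      rw [Finset.sum_eq_single K h₀ ?h₁, if_pos hsub, hidx, if_pos hdvd]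
      case h₁ =>
        intro hnot
        rw [Finset.mem_range, not_lt] at hnot
        rw [if_pos hsub, hidx]
        apply Polynomial.coeff_eq_zero_of_natDegree_lt
        have h1 : Q * (b.natDegree + 1) ≤ Q * K := Nat.mul_le_mul_left Q hnot
        have h2 : b.natDegree + 1 ≤ Q * (b.natDegree + 1) := Nat.le_mul_of_pos_left _ hQ
        omega
    · rw [if_neg hdvd]
      refine Finset.sum_eq_zero fun k _ => ?_
      rw [if_neg]
      intro hEq
      have hm : m = Q * k + n := by omega
      apply hdvd
      rw [hm, Nat.mul_add_mod, Nat.mod_eq_of_lt hn]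
  · rw [if_neg hle, if_neg]
    rintro ⟨⟩
    exact hle (Nat.mod_le m Q)

theorem poly_decomp (Q : ℕ) (hQ : 0 < Q) (b : Polynomial R) :
    (∑ n ∈ Finset.range Q, (∑ k ∈ Finset.range (b.natDegree + 1),
        C (b.coeff (k * Q + n)) * X ^ k).comp (X ^ Q) * X ^ n) = b := by
  ext m
  rw [finset_sum_coeff]
  rw [Finset.sum_congr rfl (fun n hn => key_coeff Q hQ b n m (Finset.mem_range.mp hn))]
  rw [Finset.sum_ite_eq (Finset.range Q) (m % Q) (fun _ => b.coeff m)]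
  rw [if_pos (Finset.mem_range.mpr (Nat.mod_lt m hQ))]

end Decomp

section Homs

open Polynomial

variable {R : Type*} [CommRing R] {l : ℕ}

noncomputable def coeffMapVHom (R : Type*) [CommRing R] (l : ℕ) (φ : R →+ R) :
    MV R l →+ MV R l where
  toFun w := fun j => coeffMap φ (w j)
  map_zero' := by funext j; ext m; simp [coeffMap_coeff]
  map_add' f g := by funext j; ext m; simp [coeffMap_coeff]

noncomputable def mulXVHom (R : Type*) [CommRing R] (l : ℕ) : MV R l →+ MV R l where
  toFun w := fun i => X * w i
  map_zero' := by funext i; simp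
  map_add' f g := by funext i; simp [mul_add]

theorem closure_stable (Y : Set (MV R l)) (F : MV R l →+ MV R l)
    (hgen : ∀ y ∈ Y, F y ∈ AddSubgroup.closure Y) :
    ∀ w ∈ AddSubgroup.closure Y, F w ∈ AddSubgroup.closure Y := by
  intro w hw
  refine AddSubgroup.closure_induction (fun y hy => hgen y hy) ?_ ?_ ?_ hw
  · rw [map_zero]; exact zero_mem _
  · intro x y _ _ px py; rw [map_add]; exact add_mem px py
  · intro x _ px; rw [map_neg]; exact neg_mem px

end Homs
section Gterm

open Polynomial Finset

variable {R : Type*} [CommRing R] {l : ℕ}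

noncomputable def Gterm (q e : ℕ) (B : Matrix (Fin l) (Fin l) (Polynomial R)) (n : ℕ)
    (v : Fin l → R) : MV R l :=
  fun i => (∑ j, (Hmat q e B n i j).comp (X ^ q ^ e) * C (v j)) * X ^ n

theorem suppRes_Gterm (q e : ℕ) (B : Matrix (Fin l) (Fin l) (Polynomial R)) (n : ℕ)
    (v : Fin l → R) (i : Fin l) : SuppRes (q ^ e) n (Gterm q e B n v i) := by
  have h0 : SuppRes (q ^ e) 0 (∑ j, (Hmat q e B n i j).comp (X ^ q ^ e) * C (v j)) :=
    suppRes_sum _ _ (fun j _ => suppRes_mul_C (suppRes_comp_Xpow (q ^ e) _) _)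
  have := suppRes_mul_Xpow h0 n
  rw [zero_add] at this
  exact this

theorem hdecompB (q e : ℕ) (hQ0 : 0 < q ^ e) (B : Matrix (Fin l) (Fin l) (Polynomial R))
    (i j : Fin l) :
    (∑ n ∈ Finset.range (q ^ e), (Hmat q e B n i j).comp (X ^ q ^ e) * X ^ n) = B i j :=
  poly_decomp (q ^ e) hQ0 (B i j)

theorem sum_Gterm (q e : ℕ) (hQ0 : 0 < q ^ e) (B : Matrix (Fin l) (Fin l) (Polynomial R))
    (v : Fin l → R) :
    (∑ n ∈ Finset.range (q ^ e), Gterm q e B n v) = B.mulVec (fun j => C (v j)) := by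
  funext i
  rw [Finset.sum_apply]
  simp only [Matrix.mulVec, dotProduct, Gterm]
  calc ∑ n ∈ Finset.range (q ^ e), (∑ j, (Hmat q e B n i j).comp (X ^ q ^ e) * C (v j)) * X ^ n
      = ∑ n ∈ Finset.range (q ^ e), ∑ j, ((Hmat q e B n i j).comp (X ^ q ^ e) * X ^ n) * C (v j) := by
        refine Finset.sum_congr rfl fun n _ => ?_
        rw [Finset.sum_mul]
        exact Finset.sum_congr rfl fun j _ => by ring
    _ = ∑ j, ∑ n ∈ Finset.range (q ^ e), ((Hmat q e B n i j).comp (X ^ q ^ e) * X ^ n) * C (v j) :=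
        Finset.sum_comm
    _ = ∑ j, B i j * C (v j) := by
        refine Finset.sum_congr rfl fun j _ => ?_
        rw [← Finset.sum_mul, hdecompB q e hQ0 B i j]

theorem eigen_Gterm (p : ℕ) [Fact p.Prime] [CharP R p] (q e γe : ℕ) (hQp : q ^ e = p ^ γe)
    (B : Matrix (Fin l) (Fin l) (Polynomial R)) (n : ℕ) (v : Fin l → R) (j : ℕ) (hj : j < γe) :
    thetaVHom R l (p ^ j) (Gterm q e B n v) = (n / p ^ j % p) • Gterm q e B n v := by
  funext i
  show thetaOp (p ^ j) (Gterm q e B n v i) = _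
  have hdvd : p ^ (j + 1) ∣ q ^ e := hQp ▸ pow_dvd_pow p (by omega)
  rw [thetaOp_suppRes p hdvd (suppRes_Gterm q e B n v i)]
  rfl

end Gterm

open Polynomial in
theorem stmt_17 {R : Type*} [CommRing R] (p : ℕ) [Fact p.Prime] [CharP R p]
    (γ : ℕ) (hγ : 1 ≤ γ) (q : ℕ) (hq : q = p ^ γ)
    (l : ℕ) (hl : 1 ≤ l) (A : Matrix (Fin l) (Fin l) (Polynomial R))
    (e : ℕ) (he : 1 ≤ e) :
    VClosure p (γ * e) (q ^ e)
        {w : Fin l → Polynomial R | ∃ u : Fin l → Polynomial R, w = (twistProd q A e).mulVec u}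
      = AddSubgroup.closure
          {y : Fin l → Polynomial R | ∃ φ : R →+ R, IsQLinear (q ^ e) φ ∧
            ∃ (a n : ℕ), n < q ^ e ∧ ∃ v : Fin l → R,
              y = fun i => coeffMap φ (X ^ a *
                ((∑ j, (Hmat q e (twistProd q A e) n i j).comp (X ^ q ^ e) * C (v j)) * X ^ n))} := by
  classical
  have hp : p.Prime := Fact.out
  have hQp : q ^ e = p ^ (γ * e) := by rw [hq, ← pow_mul]
  have hQ0 : 0 < q ^ e := by rw [hQp]; exact Nat.pow_pos hp.pos
  set B := twistProd q A e with hBdef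
  set Y : Set (MV R l) := {y : Fin l → Polynomial R | ∃ φ : R →+ R, IsQLinear (q ^ e) φ ∧
            ∃ (a n : ℕ), n < q ^ e ∧ ∃ v : Fin l → R,
              y = fun i => coeffMap φ (X ^ a *
                ((∑ j, (Hmat q e B n i j).comp (X ^ q ^ e) * C (v j)) * X ^ n))} with hYdef
  set T : Set (MV R l) := {w : Fin l → Polynomial R | ∃ u : Fin l → Polynomial R, w = B.mulVec u}
    with hTdef
  refine le_antisymm ?le ?ge
  case ge =>
    refine (AddSubgroup.closure_le _).mpr ?_
    rintro y ⟨φ, hφ, a, n, hn, v, rfl⟩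
    rw [SetLike.mem_coe, VClosure, AddSubgroup.mem_sInf]
    rintro V ⟨hT, hX, hθ, hφs⟩
    have hw0 : B.mulVec (fun j => C (v j)) ∈ V := hT ⟨_, rfl⟩
    have hGn : Gterm q e B n v ∈ V := by
      refine sep_multi p (γ * e) V hθ (fun n => Gterm q e B n v) ?_ ?_ n (by rw [← hQp]; exact hn)
      · intro n' hn' j hj
        exact eigen_Gterm p q e (γ * e) hQp B n' v j hj
      · rw [← hQp, sum_Gterm q e hQ0 B v]
        exact hw0
    have hpow : ∀ (c : ℕ) (w : MV R l), w ∈ V → (fun i => X ^ c * w i) ∈ V := by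
      intro c
      induction c with
      | zero => intro w hw; simpa using hw
      | succ c ihc =>
        intro w hw
        have h1 := hX _ (ihc w hw)
        have h2 : (fun i => X * ((fun i => X ^ c * w i) i)) = fun i => X ^ (c + 1) * w i := by
          funext i; ring
        rwa [h2] at h1
    exact hφs φ hφ _ (hpow a _ hGn)
  case le =>
    rw [VClosure]
    refine sInf_le ⟨?hT, ?hX, ?hθ, ?hφ⟩
    case hT =>
      rintro w ⟨u, rfl⟩
      set N := (Finset.univ.sup fun j => (u j).natDegree) + 1 with hN
      have hu : ∀ j, u j = ∑ a ∈ Finset.range N, C ((u j).coeff a) * X ^ a := by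
        intro j
        conv_lhs => rw [Polynomial.as_sum_range' (u j) N
          (Nat.lt_succ_of_le (Finset.le_sup (f := fun j => (u j).natDegree) (Finset.mem_univ j)))]
        exact Finset.sum_congr rfl fun a _ => (Polynomial.C_mul_X_pow_eq_monomial).symm
      have hsingle : ∀ (a n : ℕ) (j₀ : Fin l) (i : Fin l),
          (∑ j, (Hmat q e B n i j).comp (X ^ q ^ e)
            * C ((Pi.single j₀ ((u j₀).coeff a) : Fin l → R) j))
          = (Hmat q e B n i j₀).comp (X ^ q ^ e) * C ((u j₀).coeff a) := by
        intro a n j₀ i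
        rw [Finset.sum_eq_single j₀ ?h0 ?h1]
        · rw [Pi.single_eq_same]
        case h0 => intro j _ hj; rw [Pi.single_eq_of_ne hj, map_zero, mul_zero]
        case h1 => intro h; exact absurd (Finset.mem_univ j₀) h
      have hkey : B.mulVec u = ∑ a ∈ Finset.range N, ∑ j₀ : Fin l, ∑ n ∈ Finset.range (q ^ e),
          (fun i => X ^ a * (((Hmat q e B n i j₀).comp (X ^ q ^ e)
            * C ((u j₀).coeff a)) * X ^ n)) := by
        funext i
        simp only [Finset.sum_apply, Matrix.mulVec, dotProduct]
        rw [Finset.sum_comm]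
        refine Finset.sum_congr rfl fun j₀ _ => ?_
        calc B i j₀ * u j₀
            = B i j₀ * ∑ a ∈ Finset.range N, C ((u j₀).coeff a) * X ^ a := by rw [← hu j₀]
          _ = ∑ a ∈ Finset.range N, B i j₀ * (C ((u j₀).coeff a) * X ^ a) :=
              Finset.mul_sum _ _ _
          _ = ∑ a ∈ Finset.range N,
                (∑ n ∈ Finset.range (q ^ e), (Hmat q e B n i j₀).comp (X ^ q ^ e) * X ^ n)
                  * (C ((u j₀).coeff a) * X ^ a) := by
              refine Finset.sum_congr rfl fun a _ => ?_
              rw [hdecompB q e hQ0 B i j₀]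
          _ = ∑ a ∈ Finset.range N, ∑ n ∈ Finset.range (q ^ e),
                X ^ a * (((Hmat q e B n i j₀).comp (X ^ q ^ e) * C ((u j₀).coeff a)) * X ^ n) := by
              refine Finset.sum_congr rfl fun a _ => ?_
              rw [Finset.sum_mul]
              exact Finset.sum_congr rfl fun n _ => by ring
      rw [SetLike.mem_coe, hkey]
      refine AddSubgroup.sum_mem _ fun a _ => AddSubgroup.sum_mem _ fun j₀ _ =>
        AddSubgroup.sum_mem _ fun n hn => AddSubgroup.subset_closure ?_
      refine ⟨AddMonoidHom.id R, fun x y => rfl, a, n, Finset.mem_range.mp hn,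
        Pi.single j₀ ((u j₀).coeff a), ?_⟩
      funext i
      rw [coeffMap_id, hsingle a n j₀ i]
    case hX =>
      intro w hw
      refine closure_stable Y (mulXVHom R l) ?_ w hw
      rintro y ⟨φ, hφ, a, n, hn, v, rfl⟩
      refine AddSubgroup.subset_closure ⟨φ, hφ, a + 1, n, hn, v, ?_⟩
      funext i
      show X * coeffMap φ (X ^ a * ((∑ j, (Hmat q e B n i j).comp (X ^ q ^ e) * C (v j)) * X ^ n))
          = _
      rw [← coeffMap_X_mul]
      congr 1
      ring
    case hθ =>
      intro i h1 h2 w hw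
      refine closure_stable Y (thetaVHom R l (p ^ (i - 1))) ?_ w hw
      rintro y ⟨φ, hφ, a, n, hn, v, rfl⟩
      have hdvd : p ^ ((i - 1) + 1) ∣ q ^ e := hQp ▸ pow_dvd_pow p (by omega)
      have hsupp : ∀ ii : Fin l, SuppRes (q ^ e) (n + a)
          (X ^ a * ((∑ j, (Hmat q e B n ii j).comp (X ^ q ^ e) * C (v j)) * X ^ n)) := by
        intro ii
        rw [mul_comm]
        exact suppRes_mul_Xpow (suppRes_Gterm q e B n v ii) a
      have heq : thetaVHom R l (p ^ (i - 1)) (fun ii => coeffMap φ (X ^ a *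
            ((∑ j, (Hmat q e B n ii j).comp (X ^ q ^ e) * C (v j)) * X ^ n)))
          = ((n + a) / p ^ (i - 1) % p) • (fun ii => coeffMap φ (X ^ a *
            ((∑ j, (Hmat q e B n ii j).comp (X ^ q ^ e) * C (v j)) * X ^ n))) := by
        funext ii
        show thetaOp (p ^ (i - 1)) (coeffMap φ _) = _
        rw [thetaOp_coeffMap, thetaOp_suppRes p hdvd (hsupp ii), coeffMap_nsmul]
        rfl
      rw [heq]
      have hy : (fun ii => coeffMap φ (X ^ a *
          ((∑ j, (Hmat q e B n ii j).comp (X ^ q ^ e) * C (v j)) * X ^ n)))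
          ∈ AddSubgroup.closure Y :=
        AddSubgroup.subset_closure ⟨φ, hφ, a, n, hn, v, rfl⟩
      exact AddSubgroup.nsmul_mem _ hy _
    case hφ =>
      intro φ hφQ w hw
      refine closure_stable Y (coeffMapVHom R l φ) ?_ w hw
      rintro y ⟨ψ, hψ, a, n, hn, v, rfl⟩
      refine AddSubgroup.subset_closure ⟨φ.comp ψ, ?_, a, n, hn, v, ?_⟩
      · intro x b
        simp only [AddMonoidHom.comp_apply]
        rw [hψ, hφQ]
      · funext ii
        exact coeffMap_comp_apply φ ψ _
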